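/- There exists a sequence (S_i)_{i=1}^∞ of functions, each submultiplicative on [1,∞), such that for every nonempty finite set A ⊂ ℕ and every j ∈ ℕ \ A, we have sup_{n ≥ 1, n ∈ ℕ} S_j(n) / (max_{i ∈ A} S_i(n)) = ∞; that is, for every real number N there exists a positive integer n with S_j(n) > N · max_{i ∈ A} S_i(n). -/

import Mathlib

/-- `S` is piecewise linear on `[1,∞)`: affine on each interval of a locally finite
partition `1 = t 0 < t 1 < ⋯` with `t i → ∞`. -/
def PiecewiseLinearOnInf (S : ℝ → ℝ) : Prop :=
  ∃ t : ℕ → ℝ, t 0 = 1 ∧ StrictMono t ∧ Filter.Tendsto t Filter.atTop Filter.atTop ∧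
    ∀ i : ℕ, ∃ c d : ℝ, ∀ x ∈ Set.Icc (t i) (t (i + 1)), S x = c * x + d

/-- `S` is submultiplicative on `[1,∞)`:
(a) piecewise linear, continuous, strictly increasing and concave on `[1,∞)`;
(b) `S x = x` for `1 ≤ x ≤ 2`;
(c) `S (x*y) ≤ S x * S y` whenever `1 ≤ x` and `1 ≤ y`. -/
structure IsSubmultOnInf (S : ℝ → ℝ) : Prop where
  piecewiseLinear : PiecewiseLinearOnInf S
  continuousOn : ContinuousOn S (Set.Ici 1)
  strictMonoOn : StrictMonoOn S (Set.Ici 1)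
  concaveOn : ConcaveOn ℝ (Set.Ici 1) S
  eq_id : ∀ x : ℝ, 1 ≤ x → x ≤ 2 → S x = x
  submult : ∀ x y : ℝ, 1 ≤ x → 1 ≤ y → S (x * y) ≤ S x * S y





namespace St4

noncomputable def r : ℝ := Real.sqrt 2

lemma r_sq : r ^ 2 = 2 := Real.sq_sqrt (by norm_num)
lemma r_nonneg : 0 ≤ r := Real.sqrt_nonneg 2
lemma one_lt_r : 1 < r := by nlinarith [r_sq, r_nonneg]
lemma r_le : r ≤ 3/2 := by nlinarith [r_sq, r_nonneg]
lemma quarter_le_r : 5/4 ≤ r := by nlinarith [r_sq, r_nonneg]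

noncomputable def f (i k : ℕ) : ℝ :=
  if (Nat.unpair (Nat.log 4 (k+1))).1 = i then r else 1 + (2:ℝ)⁻¹^(k+2)

lemma small_pow_le (k : ℕ) : (2:ℝ)⁻¹^(k+2) ≤ 1/4 := by
  have : (2:ℝ)⁻¹^(k+2) ≤ (2:ℝ)⁻¹^2 :=
    pow_le_pow_of_le_one (by norm_num) (by norm_num) (by omega)
  simpa using this.trans (by norm_num)

lemma small_pow_pos (k : ℕ) : 0 < (2:ℝ)⁻¹^(k+2) := by positivity

lemma flat_le_f (i k : ℕ) : 1 + (2:ℝ)⁻¹^(k+2) ≤ f i k := by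
  unfold f; split
  · nlinarith [quarter_le_r, small_pow_le k]
  · exact le_rfl

lemma one_le_prodR {s : Finset ℕ} {g : ℕ → ℝ} (h : ∀ k ∈ s, 1 ≤ g k) :
    1 ≤ ∏ k ∈ s, g k := by
  have := Finset.prod_le_prod (f := fun _ : ℕ => (1:ℝ)) (g := g)
    (fun i _ => zero_le_one) h
  simpa using this

lemma prod_subset_le {s t : Finset ℕ} (h : s ⊆ t) {g : ℕ → ℝ} (hg : ∀ k, 1 ≤ g k) :
    ∏ k ∈ s, g k ≤ ∏ k ∈ t, g k := by
  rw [← Finset.prod_sdiff h]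
  have h1 : (1:ℝ) ≤ ∏ k ∈ t \ s, g k := one_le_prodR (fun k _ => hg k)
  have h2 : (0:ℝ) < ∏ k ∈ s, g k :=
    Finset.prod_pos (fun k _ => lt_of_lt_of_le one_pos (hg k))
  nlinarith

lemma one_lt_f (i k : ℕ) : 1 < f i k :=
  lt_of_lt_of_le (by nlinarith [small_pow_pos k]) (flat_le_f i k)

lemma f_pos (i k : ℕ) : 0 < f i k := lt_trans one_pos (one_lt_f i k)

lemma f_le_r (i k : ℕ) : f i k ≤ r := by
  unfold f; split
  · exact le_refl r
  · nlinarith [quarter_le_r, small_pow_le k]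

lemma f_mul_le (i k l : ℕ) : f i k * f i l ≤ 2 := by
  calc f i k * f i l ≤ r * r :=
        mul_le_mul (f_le_r i k) (f_le_r i l) (f_pos i l).le r_nonneg
    _ = 2 := by nlinarith [r_sq]

lemma f_le_threehalf (i k : ℕ) : f i k ≤ 3/2 := (f_le_r i k).trans r_le

noncomputable def v (i m : ℕ) : ℝ := 2 * ∏ k ∈ Finset.range m, f i k

lemma v_zero (i : ℕ) : v i 0 = 2 := by simp [v]

lemma v_succ (i m : ℕ) : v i (m+1) = v i m * f i m := by
  simp [v, Finset.prod_range_succ]; ring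

lemma two_le_v (i m : ℕ) : 2 ≤ v i m := by
  have h : (1:ℝ) ≤ ∏ k ∈ Finset.range m, f i k :=
    one_le_prodR (fun k _ => (one_lt_f i k).le)
  unfold v; nlinarith

lemma v_pos (i m : ℕ) : 0 < v i m := lt_of_lt_of_le (by norm_num) (two_le_v i m)

lemma v_lt_succ (i m : ℕ) : v i m < v i (m+1) := by
  rw [v_succ]; nlinarith [v_pos i m, one_lt_f i m]

lemma v_mono (i : ℕ) : Monotone (v i) := monotone_nat_of_le_succ (fun m => (v_lt_succ i m).le)

lemma v_doubling (i m : ℕ) : v i (m+2) ≤ 2 * v i m := by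
  rw [v_succ, v_succ, mul_assoc]
  have := f_mul_le i m (m+1)
  nlinarith [v_pos i m]

lemma v_ratio (i m : ℕ) : v i (m+1) ≤ 3/2 * v i m := by
  rw [v_succ]; nlinarith [v_pos i m, f_le_threehalf i m]

def cN (m : ℕ) : ℕ := 2^(4^m)

noncomputable def c (m : ℕ) : ℝ := (cN m : ℝ)

lemma c_eq (m : ℕ) : c m = (2:ℝ)^(4^m) := by simp [c, cN]

lemma c_zero : c 0 = 2 := by norm_num [c, cN]

lemma two_le_c (m : ℕ) : 2 ≤ c m := by
  rw [c_eq]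
  calc (2:ℝ) = 2^1 := (pow_one 2).symm
    _ ≤ 2^(4^m) := pow_le_pow_right₀ (by norm_num) (Nat.one_le_pow _ _ (by norm_num))

lemma c_pos (m : ℕ) : 0 < c m := lt_of_lt_of_le (by norm_num) (two_le_c m)

lemma c_succ (m : ℕ) : c (m+1) = (c m)^4 := by
  rw [c_eq, c_eq, ← pow_mul, pow_succ]

lemma pow4_facts (x : ℝ) (hx : 2 ≤ x) : 2 * x ≤ x^2 ∧ x^2 + x ≤ x^4 := by
  constructor
  · nlinarith
  · nlinarith [sq_nonneg x, sq_nonneg (x^2 - 2*x)]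

lemma c_lt (m : ℕ) : c m < c (m+1) := by
  rw [c_succ]
  obtain ⟨h1, h2⟩ := pow4_facts (c m) (two_le_c m)
  nlinarith [c_pos m]

lemma two_c_le (m : ℕ) : 2 * c m ≤ c (m+1) := by
  rw [c_succ]
  obtain ⟨h1, h2⟩ := pow4_facts (c m) (two_le_c m)
  nlinarith [c_pos m, sq_nonneg (c m)]

lemma c_mono : StrictMono c := strictMono_nat_of_lt_succ c_lt

lemma pow_le_c (m : ℕ) : (2:ℝ)^(m+1) ≤ c m := by
  rw [c_eq]
  apply pow_le_pow_right₀ (by norm_num)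
  calc m + 1 ≤ 2^m := Nat.succ_le_of_lt (Nat.lt_two_pow_self (n := m))
    _ ≤ 4^m := Nat.pow_le_pow_left (by norm_num) m

lemma c_growth (k : ℕ) : (2:ℝ)^(k+2) * (c (k+1) - c k) ≤ c (k+2) - c (k+1) := by
  have h1 : (2:ℝ)^(k+2) ≤ c (k+1) := pow_le_c (k+1)
  have h2 : c (k+2) = (c (k+1))^4 := c_succ (k+1)
  have h3 : 2 ≤ c (k+1) := two_le_c (k+1)
  have h4 : 0 < c k := c_pos k
  have h5 : c k < c (k+1) := c_lt k
  have A : (2:ℝ)^(k+2) * (c (k+1) - c k) ≤ c (k+1) * c (k+1) :=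
    mul_le_mul h1 (by linarith [c_pos k]) (by linarith) (by linarith)
  obtain ⟨hh1, hh2⟩ := pow4_facts (c (k+1)) h3
  nlinarith

lemma sq_c_le (m : ℕ) : (c m)^2 ≤ c (m+1) := by
  rw [c_succ]
  obtain ⟨h1, h2⟩ := pow4_facts (c m) (two_le_c m)
  nlinarith [c_pos m]

end St4

namespace St4x
end St4x
namespace St4

noncomputable def t : ℕ → ℝ
  | 0 => 1
  | (k+1) => c k

noncomputable def V (i : ℕ) : ℕ → ℝ
  | 0 => 1
  | (k+1) => v i k

noncomputable def s (i : ℕ) : ℕ → ℝ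
  | 0 => 1
  | (k+1) => (v i (k+1) - v i k) / (c (k+1) - c k)

noncomputable def L (i k : ℕ) (x : ℝ) : ℝ := V i k + s i k * (x - t k)

noncomputable def S (i : ℕ) (x : ℝ) : ℝ := ⨅ k, L i k x

lemma t_zero : t 0 = 1 := rfl
lemma t_one : t 1 = 2 := c_zero
lemma t_lt (k : ℕ) : t k < t (k+1) := by
  cases k with
  | zero => rw [t_zero, t_one]; norm_num
  | succ n => exact c_lt n

lemma t_mono : StrictMono t := strictMono_nat_of_lt_succ t_lt

lemma one_le_t (k : ℕ) : 1 ≤ t k := by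
  cases k with
  | zero => exact le_rfl
  | succ n => exact le_trans (by norm_num) (two_le_c n)

lemma cdiff_pos (k : ℕ) : 0 < c (k+1) - c k := by linarith [c_lt k]

lemma s_pos (i k : ℕ) : 0 < s i k := by
  cases k with
  | zero => norm_num [s]
  | succ n =>
      unfold s
      exact div_pos (by linarith [v_lt_succ i n]) (cdiff_pos n)

lemma L_left (i k : ℕ) : L i k (t k) = V i k := by simp [L]

lemma L_shift (i k : ℕ) (x y : ℝ) : L i k x = L i k y + s i k * (x - y) := by
  simp [L]; ring

lemma L_right (i k : ℕ) : L i k (t (k+1)) = V i (k+1) := by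
  cases k with
  | zero =>
      show V i 0 + s i 0 * (t 1 - t 0) = V i 1
      rw [t_one, t_zero]
      show (1:ℝ) + 1 * (2 - 1) = v i 0
      rw [v_zero]; norm_num
  | succ n =>
      show V i (n+1) + s i (n+1) * (t (n+2) - t (n+1)) = V i (n+2)
      show v i n + (v i (n+1) - v i n) / (c (n+1) - c n) * (c (n+1) - c n) = v i (n+1)
      rw [div_mul_cancel₀ _ (ne_of_gt (cdiff_pos n))]
      ring

-- slope monotone
lemma s_one_le : ∀ i, s i 1 ≤ 1 := by
  intro i
  show (v i 1 - v i 0) / (c 1 - c 0) ≤ 1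
  have h1 : v i 1 ≤ 3/2 * v i 0 := v_ratio i 0
  have h0 : v i 0 = 2 := v_zero i
  have hc : c 0 = 2 := c_zero
  have hc1 : (2:ℝ)^(1+1) ≤ c 1 := pow_le_c 1
  norm_num at hc1
  rw [div_le_one (by linarith)]
  linarith

lemma s_succ_le (i k : ℕ) : s i (k+2) ≤ s i (k+1) := by
  show (v i (k+2) - v i (k+1)) / (c (k+2) - c (k+1)) ≤
      (v i (k+1) - v i k) / (c (k+1) - c k)
  have d1 : 0 < c (k+2) - c (k+1) := cdiff_pos (k+1)
  have d0 : 0 < c (k+1) - c k := cdiff_pos k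
  rw [div_le_div_iff₀ d1 d0]
  -- LHS ≤ v i k * (c (k+1) - c k) ≤ RHS
  have hv2 : v i (k+2) = v i (k+1) * f i (k+1) := v_succ i (k+1)
  have hv1 : v i (k+1) = v i k * f i k := v_succ i k
  have hfu : f i (k+1) ≤ 3/2 := f_le_threehalf i (k+1)
  have hfl : 1 + (2:ℝ)⁻¹^(k+2) ≤ f i k := flat_le_f i k
  have hvr : v i (k+1) ≤ 3/2 * v i k := v_ratio i k
  have hvp : 0 < v i k := v_pos i k
  have hvp1 : 0 < v i (k+1) := v_pos i (k+1)
  have hone : 1 < f i (k+1) := one_lt_f i (k+1)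
  have step1 : v i (k+2) - v i (k+1) ≤ 3/4 * v i k := by nlinarith
  -- step 2 : v i (k+1) - v i k = v i k * (f i k - 1) ≥ v i k * 2⁻¹^(k+2)
  have step2 : v i k * (2:ℝ)⁻¹^(k+2) ≤ v i (k+1) - v i k := by nlinarith [small_pow_pos k]
  -- c growth : 2^(k+2) (c(k+1)-c k) ≤ c(k+2)-c(k+1)
  have hc := c_growth k
  have hinv : (2:ℝ)⁻¹^(k+2) = ((2:ℝ)^(k+2))⁻¹ := by
    rw [← inv_pow]
  have hpow : (0:ℝ) < (2:ℝ)^(k+2) := by positivity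
  -- (c(k+1)-c k) ≤ 2⁻¹^(k+2) * (c(k+2)-c(k+1))
  have hc' : c (k+1) - c k ≤ (2:ℝ)⁻¹^(k+2) * (c (k+2) - c (k+1)) := by
    rw [hinv, ← div_eq_inv_mul, le_div_iff₀ hpow]
    linarith [hc]
  calc (v i (k+2) - v i (k+1)) * (c (k+1) - c k)
      ≤ (3/4 * v i k) * ((2:ℝ)⁻¹^(k+2) * (c (k+2) - c (k+1))) := by
        apply mul_le_mul step1 hc' (by linarith) (by nlinarith)
    _ ≤ (v i (k+1) - v i k) * (c (k+2) - c (k+1)) := by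
        have h34 : (3/4 : ℝ) * v i k * (2:ℝ)⁻¹^(k+2) ≤ v i (k+1) - v i k := by
          nlinarith [small_pow_pos k]
        nlinarith [small_pow_pos k]

lemma s_mono_succ (i k : ℕ) : s i (k+1) ≤ s i k := by
  cases k with
  | zero => exact s_one_le i
  | succ n => exact s_succ_le i n

lemma s_anti (i : ℕ) : Antitone (s i) := antitone_nat_of_succ_le (s_mono_succ i)

lemma s_le_one (i k : ℕ) : s i k ≤ 1 := by
  have := s_anti i (Nat.zero_le k)
  simpa [s] using this

-- intercept nonneg : s i (k+1) * c k ≤ v i k - 1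
lemma intercept (i k : ℕ) : s i (k+1) * c k ≤ v i k - 1 := by
  show (v i (k+1) - v i k) / (c (k+1) - c k) * c k ≤ v i k - 1
  have d0 : 0 < c (k+1) - c k := cdiff_pos k
  rw [div_mul_eq_mul_div, div_le_iff₀ d0]
  have hv1 : v i (k+1) = v i k * f i k := v_succ i k
  have hf : f i k ≤ 3/2 := f_le_threehalf i k
  have hv : 2 ≤ v i k := two_le_v i k
  have hcc : 2 * c k ≤ c (k+1) := two_c_le k
  have hcp : 0 < c k := c_pos k
  have e1 : (v i (k+1) - v i k) * c k = v i k * (f i k - 1) * c k := by rw [hv1]; ring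
  have hvc : 0 ≤ v i k * c k := mul_nonneg (v_pos i k).le hcp.le
  have e2 : v i k * (f i k - 1) * c k ≤ v i k / 2 * c k := by nlinarith
  have e3 : v i k / 2 * c k ≤ (v i k - 1) * (c (k+1) - c k) := by
    have := mul_le_mul (show v i k / 2 ≤ v i k - 1 by linarith)
      (show c k ≤ c (k+1) - c k by linarith) hcp.le (by linarith)
    linarith
  linarith

lemma d_nonneg (i k : ℕ) : 0 ≤ V i k - s i k * t k := by
  cases k with
  | zero => show (0:ℝ) ≤ 1 - 1 * 1; norm_num
  | succ n =>
      show 0 ≤ v i n - s i (n+1) * c n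
      linarith [intercept i n]

lemma one_le_L_one (i k : ℕ) : 1 ≤ L i k 1 := by
  cases k with
  | zero => show (1:ℝ) ≤ 1 + 1 * (1 - 1); norm_num
  | succ n =>
      show 1 ≤ v i n + s i (n+1) * (1 - c n)
      have := intercept i n
      have hs := s_pos i (n+1)
      nlinarith

lemma one_le_L (i k : ℕ) {x : ℝ} (hx : 1 ≤ x) : 1 ≤ L i k x := by
  rw [L_shift i k x 1]
  have := one_le_L_one i k
  nlinarith [s_pos i k]

lemma bddBelow_L (i : ℕ) {x : ℝ} (hx : 1 ≤ x) :
    BddBelow (Set.range fun k => L i k x) := by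
  refine ⟨1, ?_⟩
  rintro _ ⟨k, rfl⟩
  exact one_le_L i k hx

lemma S_le_L (i k : ℕ) {x : ℝ} (hx : 1 ≤ x) : S i x ≤ L i k x :=
  ciInf_le (bddBelow_L i hx) k

lemma one_le_S (i : ℕ) {x : ℝ} (hx : 1 ≤ x) : 1 ≤ S i x :=
  le_ciInf (fun k => one_le_L i k hx)

-- line comparisons
lemma L_compare (i k : ℕ) (x : ℝ) :
    L i k x - L i (k+1) x = (s i k - s i (k+1)) * (x - t (k+1)) := by
  have h1 : L i k x = V i (k+1) + s i k * (x - t (k+1)) := by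
    rw [L_shift i k x (t (k+1)), L_right]
  have h2 : L i (k+1) x = V i (k+1) + s i (k+1) * (x - t (k+1)) := by
    rw [L_shift i (k+1) x (t (k+1)), L_left]
  rw [h1, h2]; ring

lemma L_le_succ (i k : ℕ) {x : ℝ} (hx : x ≤ t (k+1)) : L i k x ≤ L i (k+1) x := by
  have := L_compare i k x
  nlinarith [s_mono_succ i k]

lemma L_succ_le (i k : ℕ) {x : ℝ} (hx : t (k+1) ≤ x) : L i (k+1) x ≤ L i k x := by
  have := L_compare i k x
  nlinarith [s_mono_succ i k]

lemma chain_up (i : ℕ) {a b : ℕ} (h : a ≤ b) {x : ℝ} (hx : t b ≤ x) :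
    L i b x ≤ L i a x := by
  induction b, h using Nat.le_induction with
  | base => exact le_rfl
  | succ n hn ih =>
      have h1 : t n ≤ x := le_trans (t_mono.monotone (Nat.le_succ n)) hx
      exact le_trans (L_succ_le i n hx) (ih h1)

lemma chain_down (i : ℕ) {a b : ℕ} (h : a ≤ b) {x : ℝ} (hx : x ≤ t (a+1)) :
    L i a x ≤ L i b x := by
  induction b, h using Nat.le_induction with
  | base => exact le_rfl
  | succ n hn ih =>
      refine le_trans ih (L_le_succ i n ?_)
      exact le_trans hx (t_mono.monotone (by omega))

lemma S_piece (i k : ℕ) {x : ℝ} (h1 : t k ≤ x) (h2 : x ≤ t (k+1)) :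
    S i x = L i k x := by
  have hx1 : 1 ≤ x := le_trans (one_le_t k) h1
  refine le_antisymm (S_le_L i k hx1) (le_ciInf fun j => ?_)
  rcases le_total j k with h | h
  · exact chain_up i h h1
  · exact chain_down i h h2

lemma S_eval_t (i k : ℕ) : S i (t k) = V i k := by
  rw [S_piece i k le_rfl (t_lt k).le, L_left]

lemma S_id (i : ℕ) {x : ℝ} (h1 : 1 ≤ x) (h2 : x ≤ 2) : S i x = x := by
  have ha : t 0 ≤ x := by rw [t_zero]; exact h1
  have hb : x ≤ t 1 := by rw [t_one]; exact h2
  rw [S_piece i 0 ha hb]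
  show V i 0 + s i 0 * (x - t 0) = x
  rw [t_zero]
  show (1:ℝ) + 1 * (x - 1) = x
  ring

end St4

namespace St4

lemma exists_piece {x : ℝ} (hx : 1 ≤ x) : ∃ k, t k ≤ x ∧ x < t (k+1) := by
  have hex : ∃ k, x < t (k+1) := by
    obtain ⟨n, hn⟩ := exists_nat_gt x
    refine ⟨n, lt_of_lt_of_le hn ?_⟩
    show (n:ℝ) ≤ c n
    calc (n:ℝ) ≤ 2^(n+1) := by
          have h1 : (n:ℝ) ≤ 2^n := by
            exact_mod_cast (Nat.lt_two_pow_self (n := n)).le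
          have : (2:ℝ)^n ≤ 2^(n+1) := by
            apply pow_le_pow_right₀ (by norm_num) (by omega)
          linarith
      _ ≤ c n := pow_le_c n
  classical
  obtain ⟨k, hk, hmin⟩ : ∃ k, x < t (k+1) ∧ ∀ m, m < k → ¬ x < t (m+1) :=
    ⟨Nat.find hex, Nat.find_spec hex, fun m hm => Nat.find_min hex hm⟩
  refine ⟨k, ?_, hk⟩
  cases k with
  | zero => rw [t_zero]; exact hx
  | succ n =>
      have := hmin n (by omega)
      push_neg at this
      exact this

lemma S_strictMonoOn (i : ℕ) : StrictMonoOn (S i) (Set.Ici 1) := by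
  intro x hx y hy hxy
  simp only [Set.mem_Ici] at hx hy
  obtain ⟨kx, hkx1, hkx2⟩ := exists_piece hx
  obtain ⟨ky, hky1, hky2⟩ := exists_piece hy
  have hkk : kx ≤ ky := by
    by_contra h
    push_neg at h
    have : t (ky+1) ≤ t kx := t_mono.monotone h
    linarith
  rcases eq_or_lt_of_le hkk with h | h
  · subst h
    rw [S_piece i kx hkx1 hkx2.le, S_piece i kx (le_trans hkx1 hxy.le) hky2.le,
      L_shift i kx y x]
    nlinarith [s_pos i kx]
  · have step1 : S i x < V i (kx+1) := by
      rw [S_piece i kx hkx1 hkx2.le, ← L_right i kx, L_shift i kx (t (kx+1)) x]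
      nlinarith [s_pos i kx]
    have step2 : V i (kx+1) ≤ V i ky := by
      have : ∀ a b : ℕ, a ≤ b → V i a ≤ V i b := by
        intro a b hab
        apply monotone_nat_of_le_succ (f := V i) _ hab
        intro n
        cases n with
        | zero => show (1:ℝ) ≤ v i 0; rw [v_zero]; norm_num
        | succ m => exact (v_lt_succ i m).le
      exact this _ _ h
    have step3 : V i ky ≤ S i y := by
      rw [S_piece i ky hky1 hky2.le, L_shift i ky y (t ky), L_left]
      nlinarith [s_pos i ky]
    linarith

lemma S_monotoneOn (i : ℕ) : MonotoneOn (S i) (Set.Ici 1) :=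
  (S_strictMonoOn i).monotoneOn

lemma S_lipschitz (i : ℕ) {x y : ℝ} (hx : 1 ≤ x) (hxy : x ≤ y) :
    S i y - S i x ≤ y - x := by
  obtain ⟨kx, hkx1, hkx2⟩ := exists_piece hx
  have hy : 1 ≤ y := le_trans hx hxy
  have h1 : S i y ≤ L i kx y := S_le_L i kx hy
  rw [L_shift i kx y x, ← S_piece i kx hkx1 hkx2.le] at h1
  nlinarith [s_le_one i kx, s_pos i kx]

lemma S_continuousOn (i : ℕ) : ContinuousOn (S i) (Set.Ici 1) := by
  have : LipschitzOnWith 1 (S i) (Set.Ici 1) := by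
    rw [lipschitzOnWith_iff_dist_le_mul]
    intro x hx y hy
    simp only [Set.mem_Ici] at hx hy
    rw [Real.dist_eq, Real.dist_eq]
    simp only [NNReal.coe_one, one_mul]
    rcases le_total x y with h | h
    · rw [abs_of_nonpos (by linarith [S_monotoneOn i hx hy h] : S i x - S i y ≤ 0),
        abs_of_nonpos (by linarith)]
      linarith [S_lipschitz i hx h]
    · rw [abs_of_nonneg (by linarith [S_monotoneOn i hy hx h] : 0 ≤ S i x - S i y),
        abs_of_nonneg (by linarith)]
      linarith [S_lipschitz i hy h]
  exact this.continuousOn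

lemma S_concaveOn (i : ℕ) : ConcaveOn ℝ (Set.Ici 1) (S i) := by
  refine ⟨convex_Ici 1, ?_⟩
  intro x hx y hy a b ha hb hab
  simp only [Set.mem_Ici] at hx hy
  simp only [smul_eq_mul]
  have hz : (1:ℝ) ≤ a * x + b * y := by nlinarith
  refine le_ciInf fun k => ?_
  have hLz : L i k (a * x + b * y) = a * L i k x + b * L i k y := by
    simp only [L]
    linear_combination (s i k * t k - V i k) * hab
  rw [hLz]
  have h1 : S i x ≤ L i k x := S_le_L i k hx
  have h2 : S i y ≤ L i k y := S_le_L i k hy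
  nlinarith

lemma S_le_id (i : ℕ) {x : ℝ} (hx : 1 ≤ x) : S i x ≤ x := by
  have := S_le_L i 0 hx
  simpa [L, t_zero, V, s] using this

lemma two_le_S (i : ℕ) {x : ℝ} (hx : 2 ≤ x) : 2 ≤ S i x := by
  have h2 : S i 2 = 2 := S_id i (by norm_num) le_rfl
  calc (2:ℝ) = S i 2 := h2.symm
    _ ≤ S i x := S_monotoneOn i (Set.mem_Ici.mpr (by norm_num))
        (Set.mem_Ici.mpr (by linarith)) hx

lemma S_mul_bound (i : ℕ) {x tt : ℝ} (hx : 1 ≤ x) (ht : 1 ≤ tt) :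
    S i (tt * x) ≤ tt * S i x := by
  obtain ⟨k, hk1, hk2⟩ := exists_piece hx
  have hxx : 1 ≤ tt * x := one_le_mul_of_one_le_of_one_le ht hx
  have h1 : S i (tt * x) ≤ L i k (tt * x) := S_le_L i k hxx
  rw [S_piece i k hk1 hk2.le]
  have hd : 0 ≤ V i k - s i k * t k := d_nonneg i k
  have hL : L i k (tt * x) = s i k * (tt * x) + (V i k - s i k * t k) := by
    simp only [L]; ring
  have hL2 : L i k x = s i k * x + (V i k - s i k * t k) := by
    simp only [L]; ring
  rw [hL] at h1
  rw [hL2]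
  nlinarith [s_pos i k]

lemma S_doubling (i : ℕ) {x : ℝ} (hx : 2 ≤ x) : S i (x^2) ≤ 2 * S i x := by
  have hx2 : (4:ℝ) ≤ x^2 := by nlinarith
  have hx1 : (1:ℝ) ≤ x^2 := by linarith
  obtain ⟨k, hk1, hk2⟩ := exists_piece hx1
  have hup : S i (x^2) ≤ V i (k+1) := by
    rw [S_piece i k hk1 hk2.le, ← L_right i k, L_shift i k (t (k+1)) (x^2)]
    nlinarith [s_pos i k, hk2]
  match k with
  | 0 => rw [t_one] at hk2; linarith
  | 1 =>
      -- x^2 < t 2 = c 1 ; V i 2 = v i 1 = 2 * f i 0 ≤ 3 ; 2 * S i x ≥ 4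
      have : V i 2 ≤ 3 := by
        show v i 1 ≤ 3
        have := v_succ i 0
        rw [v_zero] at this
        nlinarith [f_le_threehalf i 0]
      linarith [two_le_S i hx]
  | (m+2) =>
      -- t (m+2) = c (m+1) ≤ x^2, so c m ≤ x
      have hcm : c m ≤ x := by
        have h1 : (c m)^2 ≤ c (m+1) := sq_c_le m
        have h2 : c (m+1) ≤ x^2 := hk1
        nlinarith [c_pos m]
      have hSx : v i m ≤ S i x := by
        have : S i (c m) = v i m := S_eval_t i (m+1)
        calc v i m = S i (c m) := this.symm
          _ ≤ S i x := S_monotoneOn i (Set.mem_Ici.mpr (le_trans (by norm_num) (two_le_c m)))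
              (Set.mem_Ici.mpr (by linarith)) hcm
      have : V i (m+3) = v i (m+2) := rfl
      calc S i (x^2) ≤ v i (m+2) := by rw [← this]; exact hup
        _ ≤ 2 * v i m := v_doubling i m
        _ ≤ 2 * S i x := by linarith

lemma S_submult (i : ℕ) : ∀ x y : ℝ, 1 ≤ x → 1 ≤ y → S i (x * y) ≤ S i x * S i y := by
  have aux : ∀ x y : ℝ, 1 ≤ x → 1 ≤ y → y ≤ x → S i (x * y) ≤ S i x * S i y := by
    intro x y hx hy hyx
    rcases le_total y 2 with h2 | h2
    · have : S i (x * y) = S i (y * x) := by rw [mul_comm]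
      rw [this]
      calc S i (y * x) ≤ y * S i x := S_mul_bound i hx hy
        _ = S i x * S i y := by rw [S_id i hy h2]; ring
    · have hxy1 : (1:ℝ) ≤ x * y := one_le_mul_of_one_le_of_one_le hx hy
      have hmono : S i (x * y) ≤ S i (x^2) := by
        apply S_monotoneOn i (Set.mem_Ici.mpr hxy1)
          (Set.mem_Ici.mpr (by nlinarith)) (by nlinarith)
      have hd : S i (x^2) ≤ 2 * S i x := S_doubling i (by linarith)
      have h2y : 2 ≤ S i y := two_le_S i h2
      have h1x : 1 ≤ S i x := one_le_S i hx
      nlinarith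
  intro x y hx hy
  rcases le_total y x with h | h
  · exact aux x y hx hy h
  · rw [mul_comm, mul_comm (S i x)]
    exact aux y x hy hx h

lemma S_piecewiseLinear (i : ℕ) : PiecewiseLinearOnInf (S i) := by
  refine ⟨t, t_zero, t_mono, ?_, ?_⟩
  · have hbound : ∀ k : ℕ, (k:ℝ) ≤ t k := by
      intro k
      cases k with
      | zero => show ((0:ℕ):ℝ) ≤ 1; norm_num
      | succ n =>
          show ((n+1:ℕ):ℝ) ≤ c n
          have h1 : (n+1 : ℕ) ≤ 2^(n+1) := (Nat.lt_two_pow_self (n := n+1)).le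
          calc ((n+1:ℕ):ℝ) ≤ (2:ℝ)^(n+1) := by exact_mod_cast h1
            _ ≤ c n := pow_le_c n
    exact Filter.tendsto_atTop_mono hbound tendsto_natCast_atTop_atTop
  · intro k
    refine ⟨s i k, V i k - s i k * t k, fun x hx => ?_⟩
    rw [S_piece i k hx.1 hx.2]
    simp only [L]; ring

lemma S_isSubmult (i : ℕ) : IsSubmultOnInf (S i) :=
  ⟨S_piecewiseLinear i, S_continuousOn i, S_strictMonoOn i, S_concaveOn i,
    fun x h1 h2 => S_id i h1 h2, S_submult i⟩

end St4

namespace St4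

lemma flatProd (K : ℕ) : ∏ k ∈ Finset.range K, (1 + (2:ℝ)⁻¹^(k+2)) ≤ 2 - (2:ℝ)⁻¹^K := by
  induction K with
  | zero => norm_num
  | succ n ih =>
      rw [Finset.prod_range_succ]
      have hy : (0:ℝ) < (2:ℝ)⁻¹^n := by positivity
      have hy1 : (2:ℝ)⁻¹^n ≤ 1 := pow_le_one₀ (by norm_num) (by norm_num)
      have e1 : (2:ℝ)⁻¹^(n+1) = (2:ℝ)⁻¹^n / 2 := by rw [pow_succ]; ring
      have e2 : (2:ℝ)⁻¹^(n+2) = (2:ℝ)⁻¹^n / 4 := by rw [pow_succ, pow_succ]; ring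
      have hp : (0:ℝ) < ∏ k ∈ Finset.range n, (1 + (2:ℝ)⁻¹^(k+2)) :=
        Finset.prod_pos (fun k _ => by positivity)
      rw [e1, e2]
      nlinarith [ih, hp, sq_nonneg ((2:ℝ)⁻¹^n)]

-- block data
lemma in_block {bn k : ℕ} (h1 : 4^bn - 1 ≤ k) (h2 : k < 4^(bn+1) - 1) :
    Nat.log 4 (k+1) = bn := by
  have hp : 1 ≤ 4^bn := Nat.one_le_pow _ _ (by norm_num)
  exact Nat.log_eq_of_pow_le_of_lt_pow (by omega) (by omega)

lemma f_in_block (j bn k : ℕ) (h1 : 4^bn - 1 ≤ k) (h2 : k < 4^(bn+1) - 1) :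
    f ((Nat.unpair bn).1) k = r := by
  unfold f
  rw [in_block h1 h2, if_pos rfl]

lemma f_out_block (i j bn k : ℕ) (hij : (Nat.unpair bn).1 ≠ i)
    (h1 : 4^bn - 1 ≤ k) (h2 : k < 4^(bn+1) - 1) :
    f i k = 1 + (2:ℝ)⁻¹^(k+2) := by
  unfold f
  rw [in_block h1 h2, if_neg hij]

-- lower bound for the winner
lemma v_winner_lb (bn : ℕ) :
    2 * r^(3 * 4^bn) ≤ v ((Nat.unpair bn).1) (4^(bn+1) - 1) := by
  set j := (Nat.unpair bn).1
  set B := 4^bn - 1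
  set M := 4^(bn+1) - 1
  have hBM : B ≤ M := by
    have h4 : (4:ℕ)^bn ≤ 4^(bn+1) := Nat.pow_le_pow_right (by norm_num) (by omega)
    simp only [B, M]; omega
  have hsub : Finset.Ico B M ⊆ Finset.range M := by
    rw [Finset.range_eq_Ico]
    exact Finset.Ico_subset_Ico (Nat.zero_le B) le_rfl
  have h1 : ∏ k ∈ Finset.Ico B M, f j k ≤ ∏ k ∈ Finset.range M, f j k :=
    prod_subset_le hsub (fun k => (one_lt_f j k).le)
  have h2 : ∏ k ∈ Finset.Ico B M, f j k = r^(3 * 4^bn) := by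
    have heq : ∀ k ∈ Finset.Ico B M, f j k = r := by
      intro k hk
      rw [Finset.mem_Ico] at hk
      exact f_in_block j bn k hk.1 hk.2
    rw [Finset.prod_congr rfl heq, Finset.prod_const, Nat.card_Ico]
    congr 1
    have hp : 1 ≤ (4:ℕ)^bn := Nat.one_le_pow _ _ (by norm_num)
    have h4 : (4:ℕ)^(bn+1) = 4 * 4^bn := by rw [pow_succ]; ring
    simp only [B, M]; omega
  unfold v
  nlinarith [h1, h2.symm.le, h2.ge]

-- upper bound for everyone else
lemma v_other_ub (i bn : ℕ) (hi : (Nat.unpair bn).1 ≠ i) :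
    v i (4^(bn+1) - 1) ≤ 4 * r^(4^bn) := by
  set B := 4^bn - 1 with hB
  set M := 4^(bn+1) - 1 with hM
  have hBM : B ≤ M := by
    have h4 : (4:ℕ)^bn ≤ 4^(bn+1) := Nat.pow_le_pow_right (by norm_num) (by omega)
    simp only [B, M]; omega
  have hsplit : (∏ k ∈ Finset.range B, f i k) * (∏ k ∈ Finset.Ico B M, f i k)
      = ∏ k ∈ Finset.range M, f i k := Finset.prod_range_mul_prod_Ico _ hBM
  have h1 : ∏ k ∈ Finset.range B, f i k ≤ r^B := by
    calc ∏ k ∈ Finset.range B, f i k ≤ ∏ k ∈ Finset.range B, r :=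
          Finset.prod_le_prod (fun k _ => (f_pos i k).le) (fun k _ => f_le_r i k)
      _ = r^B := by rw [Finset.prod_const, Finset.card_range]
  have h2 : ∏ k ∈ Finset.Ico B M, f i k ≤ 2 := by
    have heq : ∀ k ∈ Finset.Ico B M, f i k = 1 + (2:ℝ)⁻¹^(k+2) := by
      intro k hk
      rw [Finset.mem_Ico] at hk
      exact f_out_block i i bn k hi hk.1 hk.2
    rw [Finset.prod_congr rfl heq]
    calc ∏ k ∈ Finset.Ico B M, (1 + (2:ℝ)⁻¹^(k+2))
        ≤ ∏ k ∈ Finset.range M, (1 + (2:ℝ)⁻¹^(k+2)) := by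
          apply prod_subset_le
          · rw [Finset.range_eq_Ico]
            exact Finset.Ico_subset_Ico (Nat.zero_le B) le_rfl
          · intro k; nlinarith [small_pow_pos k]
      _ ≤ 2 - (2:ℝ)⁻¹^M := flatProd M
      _ ≤ 2 := by nlinarith [pow_pos (show (0:ℝ) < 2⁻¹ by norm_num) M]
  have hB4 : B ≤ 4^bn := by
    have h : 1 ≤ (4:ℕ)^bn := Nat.one_le_pow _ _ (by norm_num)
    simp only [hB]; omega
  have hrB : r^B ≤ r^(4^bn) := pow_le_pow_right₀ one_lt_r.le hB4
  have hp1 : (0:ℝ) < ∏ k ∈ Finset.range B, f i k :=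
    Finset.prod_pos (fun k _ => f_pos i k)
  have hp2 : (0:ℝ) < ∏ k ∈ Finset.Ico B M, f i k :=
    Finset.prod_pos (fun k _ => f_pos i k)
  have hrpos : (0:ℝ) < r^B := pow_pos (lt_trans zero_lt_one one_lt_r) B
  unfold v
  rw [← hsplit]
  nlinarith [mul_le_mul h1 h2 hp2.le hrpos.le, hrB]

end St4



open St4

/-- Proposition 2.6. There is a sequence `(Sᵢ)` of submultiplicative
functions on `[1,∞)` such that for every nonempty finite `A ⊆ ℕ` and every `j ∉ A`,
`sup_{n ≥ 1} S_j(n) / max_{i ∈ A} S_i(n) = ∞`, i.e. for every real `N` there is a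
positive integer `n` with `S_j(n) > N · max_{i ∈ A} S_i(n)`. -/
theorem statement4 :
    ∃ S : ℕ → ℝ → ℝ, (∀ i : ℕ, IsSubmultOnInf (S i)) ∧
      ∀ A : Finset ℕ, ∀ hA : A.Nonempty, ∀ j : ℕ, j ∉ A → ∀ N : ℝ,
        ∃ n : ℕ, 1 ≤ n ∧ N * (A.sup' hA fun i => S i (n : ℝ)) < S j (n : ℝ) := by
  
  refine ⟨St4.S, S_isSubmult, ?_⟩
  intro A hA j hj N
  obtain ⟨K0, hK0⟩ := exists_nat_gt (2 * N)
  set bn := Nat.pair j K0 with hbn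
  set M := 4^(bn+1) - 1 with hM
  refine ⟨cN M, by unfold cN; exact Nat.one_le_two_pow, ?_⟩
  have hcast : ((cN M : ℕ) : ℝ) = t (M+1) := rfl
  have hev : ∀ i, St4.S i ((cN M : ℕ) : ℝ) = v i M := by
    intro i
    rw [hcast, S_eval_t]
    rfl
  have hj_eq : (Nat.unpair bn).1 = j := by rw [hbn, Nat.unpair_pair]
  have hsup : A.sup' hA (fun i => St4.S i ((cN M : ℕ) : ℝ)) ≤ 4 * r^(4^bn) := by
    apply Finset.sup'_le
    intro i hi
    rw [hev i]
    refine v_other_ub i bn ?_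
    rw [hj_eq]
    intro h
    exact hj (h ▸ hi)
  have hjlb : 2 * r^(3*4^bn) ≤ St4.S j ((cN M : ℕ) : ℝ) := by
    rw [hev j]
    have := v_winner_lb bn
    rw [hj_eq] at this
    exact this
  have hra : (0:ℝ) < r^(4^bn) := pow_pos (lt_trans zero_lt_one one_lt_r) _
  have hsplit : r^(3*4^bn) = 2^(4^bn) * r^(4^bn) := by
    have h3 : 3*4^bn = 2*4^bn + 4^bn := by ring
    rw [h3, pow_add, pow_mul, r_sq]
  rcases le_or_gt N 0 with hN | hN
  · have h1 : N * (A.sup' hA fun i => St4.S i ((cN M : ℕ) : ℝ)) ≤ 0 := by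
      obtain ⟨i0, hi0⟩ := id hA
      have h2 : (2:ℝ) ≤ St4.S i0 ((cN M : ℕ) : ℝ) := by
        rw [hev i0]; exact two_le_v i0 M
      have h3 : (2:ℝ) ≤ A.sup' hA (fun i => St4.S i ((cN M : ℕ) : ℝ)) :=
        le_trans h2 (Finset.le_sup' (f := fun i => St4.S i ((cN M : ℕ) : ℝ)) hi0)
      exact mul_nonpos_of_nonpos_of_nonneg hN (by linarith)
    have h2 : (0:ℝ) < 2 * r^(3*4^bn) := by
      have := pow_pos (lt_trans zero_lt_one one_lt_r) (3*4^bn)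
      linarith
    linarith
  · have hKbn : K0 ≤ 4^bn := by
      calc K0 ≤ bn := Nat.right_le_pair j K0
        _ ≤ 2^bn := (Nat.lt_two_pow_self (n := bn)).le
        _ ≤ 4^bn := Nat.pow_le_pow_left (by norm_num) bn
    have hK2 : (K0:ℝ) ≤ 2^(4^bn) := by
      calc (K0:ℝ) ≤ 2^K0 := by exact_mod_cast (Nat.lt_two_pow_self (n := K0)).le
        _ ≤ 2^(4^bn) := pow_le_pow_right₀ (by norm_num) hKbn
    have hN2 : 2*N < 2^(4^bn) := lt_of_lt_of_le hK0 hK2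
    calc N * (A.sup' hA fun i => St4.S i ((cN M : ℕ) : ℝ))
        ≤ N * (4 * r^(4^bn)) := by nlinarith
      _ < 2 * r^(3*4^bn) := by rw [hsplit]; nlinarith
      _ ≤ St4.S j ((cN M : ℕ) : ℝ) := hjlb
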